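/- Let a graph be partitioned into clusters C_1,…,C_k whose induced subgraphs are connected. Then for any two graph signals u, v: Σ_{i∈V} v_i u_i ≤ (max_l |(1/|C_l|)Σ_{i∈C_l} v_i|)·Σ_{j∈V}|u_j| + (max_l ‖(D_{C_l}†)ᵀ v_{C_l}‖_∞)·‖u‖_TV, where D_{C_l} is the incidence matrix of the subgraph induced by C_l. -/

import Mathlib

open Matrix

/-- Oriented incidence matrix of a weighted graph on vertex set `V`:
rows are indexed by ordered pairs `(i,j)` with `i < j` (the chosen orientation),
with entry `√W_{ij}` at the head `i`, `−√W_{ij}` at the tail `j`, and `0` otherwise. -/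
noncomputable def inc {V : Type*} [Fintype V] [DecidableEq V] [LinearOrder V]
    (W : Matrix V V ℝ) : Matrix (V × V) V ℝ :=
  fun e k =>
    if e.1 < e.2 then
      (if k = e.1 then Real.sqrt (W e.1 e.2)
       else if k = e.2 then -Real.sqrt (W e.1 e.2) else 0)
    else 0

/-- Graph Laplacian `L = Λ − W`, where `Λ` is the diagonal matrix of weighted degrees. -/
noncomputable def lap {V : Type*} [Fintype V] [DecidableEq V]
    (W : Matrix V V ℝ) : Matrix V V ℝ :=
  Matrix.diagonal (fun i => ∑ j, W i j) - W


/-- Weighted total variation (edges are ordered pairs `i < j`). -/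
noncomputable def tv {V : Type*} [Fintype V] [LinearOrder V]
    (W : Matrix V V ℝ) (x : V → ℝ) : ℝ :=
  ∑ p : V × V, if p.1 < p.2 then Real.sqrt (W p.1 p.2) * |x p.2 - x p.1| else 0


set_option linter.unusedSectionVars false
set_option linter.unusedVariables false

section Helpers

variable {S : Type*} [Fintype S] [DecidableEq S] [LinearOrder S]

lemma inc_mulVec (W' : Matrix S S ℝ) (x : S → ℝ) (e : S × S) :
    (inc W').mulVec x e =
      if e.1 < e.2 then Real.sqrt (W' e.1 e.2) * (x e.1 - x e.2) else 0 := by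
  rcases e with ⟨i, j⟩
  by_cases hij : i < j
  · have hne : i ≠ j := ne_of_lt hij
    simp only [Matrix.mulVec, dotProduct, inc, hij, if_true]
    have h : ∀ k, (if k = i then Real.sqrt (W' i j)
        else if k = j then -Real.sqrt (W' i j) else 0) * x k
        = (if k = i then Real.sqrt (W' i j) * x i else 0)
          + (if k = j then -Real.sqrt (W' i j) * x j else 0) := by
      intro k
      by_cases h1 : k = i
      · subst h1; simp [hne]
      · by_cases h2 : k = j
        · subst h2; simp [h1]
        · simp [h1, h2]
    rw [Finset.sum_congr rfl fun k _ => h k, Finset.sum_add_distrib,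
      Finset.sum_ite_eq' Finset.univ i, Finset.sum_ite_eq' Finset.univ j]
    simp; ring
  · simp [Matrix.mulVec, dotProduct, inc, hij]

lemma inc_const (W' : Matrix S S ℝ) (a : ℝ) :
    (inc W').mulVec (fun _ => a) = 0 := by
  funext e
  rw [inc_mulVec]
  split <;> simp

lemma inc_ker (W' : Matrix S S ℝ) (hsym : ∀ i j, W' i j = W' j i)
    (hnn : ∀ i j, 0 ≤ W' i j)
    (hconn : (SimpleGraph.fromRel fun i j : S => W' i j ≠ 0).Connected)
    (x : S → ℝ) (hx : (inc W').mulVec x = 0) : ∀ i j, x i = x j := by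
  have key : ∀ i j : S, W' i j ≠ 0 → i < j → x i = x j := by
    intro i j hw hij
    have h0 := congrFun hx (i, j)
    rw [inc_mulVec] at h0
    simp only [hij, if_true, Pi.zero_apply] at h0
    have hpos : 0 < W' i j := (hnn i j).lt_of_ne (Ne.symm hw)
    have hs : Real.sqrt (W' i j) ≠ 0 := ne_of_gt (Real.sqrt_pos.mpr hpos)
    have := (mul_eq_zero.mp h0).resolve_left hs
    linarith
  have adj : ∀ i j : S, (SimpleGraph.fromRel fun i j : S => W' i j ≠ 0).Adj i j →
      x i = x j := by
    intro i j h
    obtain ⟨hne, h⟩ := h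
    have hw : W' i j ≠ 0 := by
      rcases h with h | h
      · exact h
      · rw [hsym]; exact h
    rcases lt_or_gt_of_ne hne with hlt | hlt
    · exact key i j hw hlt
    · exact (key j i (by rwa [hsym i j] at hw) hlt).symm
  intro i j
  obtain ⟨w⟩ := hconn.preconnected i j
  induction w with
  | nil => rfl
  | cons h _ ih => exact (adj _ _ h).trans ih

lemma sum_abs_inc (W' : Matrix S S ℝ) (u : S → ℝ) :
    ∑ e : S × S, |(inc W').mulVec u e| = tv W' u := by
  unfold tv
  refine Finset.sum_congr rfl fun e _ => ?_
  rw [inc_mulVec]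
  split
  · rw [abs_mul, abs_of_nonneg (Real.sqrt_nonneg _), abs_sub_comm]
  · simp

lemma tv_nonneg (W' : Matrix S S ℝ) (u : S → ℝ) : 0 ≤ tv W' u := by
  refine Finset.sum_nonneg fun p _ => ?_
  split
  · positivity
  · exact le_refl 0

lemma cluster [Nonempty S] (W' : Matrix S S ℝ) (hsym : ∀ i j, W' i j = W' j i)
    (hnn : ∀ i j, 0 ≤ W' i j)
    (hconn : (SimpleGraph.fromRel fun i j : S => W' i j ≠ 0).Connected)
    (Dp : Matrix S (S × S) ℝ)
    (hp1 : inc W' * Dp * inc W' = inc W')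
    (hp4 : (Dp * inc W')ᵀ = Dp * inc W')
    (u v : S → ℝ) :
    ∑ i, v i * u i ≤
      |(1 / (Fintype.card S : ℝ)) * ∑ i, v i| * (∑ i, |u i|)
        + (⨆ e : S × S, |Dpᵀ.mulVec v e|) * tv W' u := by
  classical
  set D := inc W' with hD
  set P := Dp * D with hPdef
  set n : ℝ := (Fintype.card S : ℝ) with hn
  have hnpos : (0:ℝ) < n := by
    rw [hn]
    exact_mod_cast Fintype.card_pos (α := S)
  -- u - P u is in the kernel of D
  have hDPu : D.mulVec (P.mulVec u) = D.mulVec u := by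
    rw [Matrix.mulVec_mulVec, ← Matrix.mul_assoc, hp1]
  have hker : D.mulVec (u - P.mulVec u) = 0 := by
    rw [Matrix.mulVec_sub, hDPu, sub_self]
  have hconst := inc_ker W' hsym hnn hconn _ hker
  -- row sums of P vanish
  have hP1 : P.mulVec (fun _ => (1:ℝ)) = 0 := by
    rw [hPdef, ← Matrix.mulVec_mulVec, inc_const]
    simp [Matrix.mulVec_zero]
  have hvecMul : Matrix.vecMul (fun _ => (1:ℝ)) P = 0 := by
    have h := congrArg (fun M => M.mulVec (fun _ => (1:ℝ))) hp4
    simp only [Matrix.mulVec_transpose] at h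
    rw [h]; exact hP1
  have hsumP : ∑ i, P.mulVec u i = 0 := by
    have h : (fun _ => (1:ℝ)) ⬝ᵥ P.mulVec u = 0 := by
      rw [Matrix.dotProduct_mulVec, hvecMul, zero_dotProduct]
    simpa [dotProduct] using h
  -- decomposition
  have hdecomp : ∀ i, u i = P.mulVec u i + (∑ j, u j) / n := by
    intro i
    have hsum : ∑ j, (u - P.mulVec u) j = n * (u - P.mulVec u) i := by
      rw [Finset.sum_congr rfl fun j _ => hconst j i]
      simp [hn, mul_comm]
      ring
    have hsum2 : ∑ j, (u - P.mulVec u) j = ∑ j, u j := by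
      simp only [Pi.sub_apply]
      rw [Finset.sum_sub_distrib, hsumP, sub_zero]
    have hval : (u - P.mulVec u) i = (∑ j, u j) / n := by
      rw [eq_div_iff (ne_of_gt hnpos), mul_comm, ← hsum, hsum2]
    have := hval
    simp only [Pi.sub_apply] at this
    linarith [this]
  have hsplit : ∑ i, v i * u i
      = (Dpᵀ.mulVec v ⬝ᵥ D.mulVec u) + ((1 / n) * ∑ i, v i) * ∑ j, u j := by
    have h1 : ∑ i, v i * u i
        = ∑ i, v i * P.mulVec u i + (∑ i, v i) * ((∑ j, u j) / n) := by
      have : ∑ i, v i * u i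
          = ∑ i, (v i * P.mulVec u i + v i * ((∑ j, u j) / n)) := by
        refine Finset.sum_congr rfl fun i _ => ?_
        rw [hdecomp i]; ring
      rw [this, Finset.sum_add_distrib, ← Finset.sum_mul]
    have h2 : ∑ i, v i * P.mulVec u i = Dpᵀ.mulVec v ⬝ᵥ D.mulVec u := by
      have : v ⬝ᵥ P.mulVec u = Dpᵀ.mulVec v ⬝ᵥ D.mulVec u := by
        rw [hPdef, ← Matrix.mulVec_mulVec, Matrix.dotProduct_mulVec,
          ← Matrix.mulVec_transpose]
      simpa [dotProduct] using this
    rw [h1, h2]; ring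
  set B : ℝ := ⨆ e : S × S, |Dpᵀ.mulVec v e| with hB
  have hBle : ∀ e : S × S, |Dpᵀ.mulVec v e| ≤ B :=
    fun e => le_ciSup (f := fun e : S × S => |Dpᵀ.mulVec v e|)
      (Finite.bddAbove_range _) e
  have hBnn : 0 ≤ B := le_trans (abs_nonneg _) (hBle (Classical.arbitrary _))
  have hterm1 : Dpᵀ.mulVec v ⬝ᵥ D.mulVec u ≤ B * tv W' u := by
    rw [← sum_abs_inc W' u, Finset.mul_sum]
    calc Dpᵀ.mulVec v ⬝ᵥ D.mulVec u
        ≤ ∑ e, |Dpᵀ.mulVec v e * D.mulVec u e| :=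
          Finset.sum_le_sum fun e _ => le_abs_self _
      _ ≤ ∑ e, B * |D.mulVec u e| := by
          refine Finset.sum_le_sum fun e _ => ?_
          rw [abs_mul]
          exact mul_le_mul_of_nonneg_right (hBle e) (abs_nonneg _)
  have hterm2 : ((1 / n) * ∑ i, v i) * ∑ j, u j
      ≤ |(1 / n) * ∑ i, v i| * ∑ i, |u i| := by
    calc ((1 / n) * ∑ i, v i) * ∑ j, u j
        ≤ |((1 / n) * ∑ i, v i) * ∑ j, u j| := le_abs_self _
      _ = |(1 / n) * ∑ i, v i| * |∑ j, u j| := abs_mul _ _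
      _ ≤ |(1 / n) * ∑ i, v i| * ∑ i, |u i| :=
          mul_le_mul_of_nonneg_left (Finset.abs_sum_le_sum_abs _ _) (abs_nonneg _)
  rw [hsplit]
  linarith [hterm1, hterm2]

end Helpers

lemma sum_subtype_fiber {V : Type*} [Fintype V] {ι : Type*} [DecidableEq ι]
    (c : V → ι) (l : ι) (f : V → ℝ) :
    ∑ i : {i // c i = l}, f i.1 = ∑ i, if c i = l then f i else 0 := by
  classical
  rw [← Finset.sum_filter]
  exact (Finset.sum_subtype _ (by simp) f).symm

lemma sum_tv_le {V : Type*} [Fintype V] [DecidableEq V] [LinearOrder V]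
    {ι : Type*} [Fintype ι] [DecidableEq ι]
    (W : Matrix V V ℝ) (hnn : ∀ i j, 0 ≤ W i j) (c : V → ι) (u : V → ℝ) :
    ∑ l, tv (Matrix.of fun i j : {i // c i = l} => W i.1 j.1) (fun i => u i.1)
      ≤ tv W u := by
  classical
  set g : V → V → ℝ := fun i j =>
    if i < j then Real.sqrt (W i j) * |u j - u i| else 0 with hg
  have hgnn : ∀ i j, 0 ≤ g i j := by
    intro i j; rw [hg]; dsimp only; split
    · positivity
    · exact le_rfl
  have step1 : ∀ l, tv (Matrix.of fun i j : {i // c i = l} => W i.1 j.1)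
      (fun i => u i.1) = ∑ i, ∑ j, if c i = l ∧ c j = l then g i j else 0 := by
    intro l
    unfold tv
    have h1 : ∑ p : {i // c i = l} × {i // c i = l},
        (if p.1 < p.2 then
          Real.sqrt ((Matrix.of fun i j : {i // c i = l} => W i.1 j.1) p.1 p.2)
            * |u p.2.1 - u p.1.1| else 0)
        = ∑ p : {i // c i = l} × {i // c i = l}, g p.1.1 p.2.1 := by
      refine Finset.sum_congr rfl fun p _ => ?_
      rw [hg]; dsimp only [Matrix.of_apply]
      by_cases h : p.1 < p.2
      · rw [if_pos h, if_pos (Subtype.coe_lt_coe.mpr h)]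
      · rw [if_neg h, if_neg (fun hh => h (Subtype.coe_lt_coe.mp hh))]
    rw [h1, Fintype.sum_prod_type]
    rw [sum_subtype_fiber c l (fun i => ∑ j : {j // c j = l}, g i j.1)]
    refine Finset.sum_congr rfl fun i _ => ?_
    by_cases hi : c i = l
    · rw [if_pos hi, sum_subtype_fiber c l (fun j => g i j)]
      refine Finset.sum_congr rfl fun j _ => ?_
      by_cases hj : c j = l
      · rw [if_pos hj, if_pos ⟨hi, hj⟩]
      · rw [if_neg hj, if_neg (fun h => hj h.2)]
    · rw [if_neg hi]
      refine (Finset.sum_eq_zero fun j _ => ?_).symm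
      rw [if_neg (fun h => hi h.1)]
  calc ∑ l, tv (Matrix.of fun i j : {i // c i = l} => W i.1 j.1) (fun i => u i.1)
      = ∑ i, ∑ j, ∑ l, if c i = l ∧ c j = l then g i j else 0 := by
        rw [Finset.sum_congr rfl fun l _ => step1 l, Finset.sum_comm]
        exact Finset.sum_congr rfl fun i _ => Finset.sum_comm
    _ ≤ ∑ i, ∑ j, g i j := by
        refine Finset.sum_le_sum fun i _ => Finset.sum_le_sum fun j _ => ?_
        calc ∑ l, (if c i = l ∧ c j = l then g i j else 0)
            ≤ ∑ l, (if c i = l then g i j else 0) := by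
              refine Finset.sum_le_sum fun l _ => ?_
              by_cases h1 : c i = l ∧ c j = l
              · rw [if_pos h1, if_pos h1.1]
              · rw [if_neg h1]
                split
                · exact hgnn i j
                · exact le_rfl
          _ = g i j := by rw [Finset.sum_ite_eq]; simp
    _ = tv W u := by rw [tv, Fintype.sum_prod_type]

/-- **Cluster-wise decomposition bound (Corollary 1).**
Let the nodes be partitioned into clusters `C_l = {i : c i = l}` whose induced subgraphs
are connected, with oriented incidence matrices `D_{C_l}` and Moore–Penrose
pseudo-inverses `Dp l`. Then for any two graph signals `u, v`:
`Σ_{i∈V} vᵢ uᵢ ≤ (max_l |(1/|C_l|) Σ_{i∈C_l} vᵢ|) Σ_{j∈V}|uⱼ|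
  + (max_l ‖(D_{C_l}†)ᵀ v_{C_l}‖_∞) ‖u‖_TV`. -/
theorem stmt19 {V : Type*} [Fintype V] [DecidableEq V] [LinearOrder V]
    {ι : Type*} [Fintype ι] [DecidableEq ι] [Nonempty ι]
    (W : Matrix V V ℝ)
    (hsym : ∀ i j, W i j = W j i)
    (hnonneg : ∀ i j, 0 ≤ W i j)
    (hdiag : ∀ i, W i i = 0)
    (c : V → ι) (hc : Function.Surjective c)
    (hconn : ∀ l : ι, (SimpleGraph.fromRel
      (fun i j : {i // c i = l} => W i.1 j.1 ≠ 0)).Connected)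
    (Dp : ∀ l : ι, Matrix {i // c i = l} ({i // c i = l} × {i // c i = l}) ℝ)
    (hp1 : ∀ l, inc (Matrix.of fun i j : {i // c i = l} => W i.1 j.1) * Dp l *
            inc (Matrix.of fun i j : {i // c i = l} => W i.1 j.1)
          = inc (Matrix.of fun i j : {i // c i = l} => W i.1 j.1))
    (hp2 : ∀ l, Dp l * inc (Matrix.of fun i j : {i // c i = l} => W i.1 j.1) * Dp l = Dp l)
    (hp3 : ∀ l, (inc (Matrix.of fun i j : {i // c i = l} => W i.1 j.1) * Dp l)ᵀ
          = inc (Matrix.of fun i j : {i // c i = l} => W i.1 j.1) * Dp l)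
    (hp4 : ∀ l, (Dp l * inc (Matrix.of fun i j : {i // c i = l} => W i.1 j.1))ᵀ
          = Dp l * inc (Matrix.of fun i j : {i // c i = l} => W i.1 j.1))
    (u v : V → ℝ) :
    ∑ i, v i * u i ≤
      (⨆ l : ι, |(1 / (Fintype.card {i // c i = l} : ℝ)) * ∑ i : {i // c i = l}, v i.1|)
          * (∑ j, |u j|)
        + (⨆ l : ι, ⨆ e : {i // c i = l} × {i // c i = l},
            |(Dp l)ᵀ.mulVec (fun i : {i // c i = l} => v i.1) e|) * tv W u := by
  classical
  have hnel : ∀ l, Nonempty {i // c i = l} := by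
    intro l
    obtain ⟨i, hi⟩ := hc l
    exact ⟨⟨i, hi⟩⟩
  set A : ℝ := ⨆ l : ι,
    |(1 / (Fintype.card {i // c i = l} : ℝ)) * ∑ i : {i // c i = l}, v i.1| with hA
  set B : ℝ := ⨆ l : ι, ⨆ e : {i // c i = l} × {i // c i = l},
    |(Dp l)ᵀ.mulVec (fun i : {i // c i = l} => v i.1) e| with hB
  set X : ι → ℝ := fun l => ∑ i : {i // c i = l}, |u i.1| with hX
  set T : ι → ℝ := fun l =>
    tv (Matrix.of fun i j : {i // c i = l} => W i.1 j.1) (fun i => u i.1) with hT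
  have hAle : ∀ l,
      |(1 / (Fintype.card {i // c i = l} : ℝ)) * ∑ i : {i // c i = l}, v i.1| ≤ A :=
    fun l => le_ciSup (f := fun l : ι =>
      |(1 / (Fintype.card {i // c i = l} : ℝ)) * ∑ i : {i // c i = l}, v i.1|)
      (Finite.bddAbove_range _) l
  have hBle : ∀ l, (⨆ e : {i // c i = l} × {i // c i = l},
      |(Dp l)ᵀ.mulVec (fun i : {i // c i = l} => v i.1) e|) ≤ B :=
    fun l => le_ciSup (f := fun l : ι => ⨆ e : {i // c i = l} × {i // c i = l},
      |(Dp l)ᵀ.mulVec (fun i : {i // c i = l} => v i.1) e|)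
      (Finite.bddAbove_range _) l
  have hBnn : 0 ≤ B := by
    obtain ⟨l⟩ := ‹Nonempty ι›
    haveI := hnel l
    obtain ⟨e0⟩ : Nonempty ({i // c i = l} × {i // c i = l}) := inferInstance
    have h1 : |(Dp l)ᵀ.mulVec (fun i : {i // c i = l} => v i.1) e0|
        ≤ ⨆ e : {i // c i = l} × {i // c i = l},
          |(Dp l)ᵀ.mulVec (fun i : {i // c i = l} => v i.1) e| :=
      le_ciSup (f := fun e : {i // c i = l} × {i // c i = l} =>
        |(Dp l)ᵀ.mulVec (fun i : {i // c i = l} => v i.1) e|)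
        (Finite.bddAbove_range _) e0
    exact le_trans (le_trans (abs_nonneg _) h1) (hBle l)
  have hXnn : ∀ l, 0 ≤ X l := fun l => Finset.sum_nonneg fun i _ => abs_nonneg _
  have hTnn : ∀ l, 0 ≤ T l := fun l => tv_nonneg _ _
  have key : ∀ l : ι, ∑ i : {i // c i = l}, v i.1 * u i.1 ≤ A * X l + B * T l := by
    intro l
    haveI := hnel l
    have hcl := cluster (Matrix.of fun i j : {i // c i = l} => W i.1 j.1)
      (fun i j => hsym _ _) (fun i j => hnonneg _ _) (hconn l) (Dp l)
      (hp1 l) (hp4 l) (fun i => u i.1) (fun i => v i.1)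
    refine le_trans hcl (add_le_add ?_ ?_)
    · exact mul_le_mul_of_nonneg_right (hAle l) (hXnn l)
    · exact mul_le_mul_of_nonneg_right (hBle l) (hTnn l)
  calc ∑ i, v i * u i
      = ∑ l, ∑ i : {i // c i = l}, v i.1 * u i.1 :=
        (Fintype.sum_fiberwise c fun i => v i * u i).symm
    _ ≤ ∑ l, (A * X l + B * T l) := Finset.sum_le_sum fun l _ => key l
    _ = A * ∑ l, X l + B * ∑ l, T l := by
        rw [Finset.sum_add_distrib, Finset.mul_sum, Finset.mul_sum]
    _ ≤ A * (∑ j, |u j|) + B * tv W u := by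
        have h1 : ∑ l, X l = ∑ j, |u j| := Fintype.sum_fiberwise c fun i => |u i|
        rw [h1]
        exact add_le_add le_rfl
          (mul_le_mul_of_nonneg_left (sum_tv_le W hnonneg c u) hBnn)
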